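/- Fix an integer m ≥ 1 and a real p with 1 ≤ p < ∞. Let α_{nk} (n, k ≥ 1) be a doubly indexed family of reals (α_{nk} = log a_{nk} for an infinite matrix A of geometric real numbers), and define b_{ik} = (1/i) · (Δ^{m-1}α_{1k} − Δ^{m-1}α_{(i+1)k}), where Δ^{m-1} acts on the row index: Δ^{m-1}α_{nk} = ∑_{v=0}^{m-1} (−1)^v · binom(m-1,v) · α_{(n+v)k}. Then the following are equivalent: (I) for every bounded real sequence t, the series A_n(t) = ∑_{k=1}^∞ α_{nk} t_k converges for each n and ∑_{i=1}^∞ |(1/i) ∑_{n=1}^i Δ^m A_n(t)|^p < ∞; (II) (i) ∑_{k=1}^∞ |α_{nk}| < ∞ for each n, and (ii) for every bounded real sequence t, the series B_i(t) = ∑_{k=1}^∞ b_{ik} t_k converges for each i and ∑_{i=1}^∞ |B_i(t)|^p < ∞. (In the paper's notation: A ∈ (ℓ_∞^G, C_p^G(Δ_G^m)) if and only if the rows of A are in ℓ_1^G and B ∈ (ℓ_∞^G, ℓ_p^G).) -/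
import Mathlib


/-- Classical `m`-th order forward difference
`Δ^m y_k = ∑_{v=0}^m (−1)^v C(m,v) y_{k+v}`. -/
noncomputable def fdiff (m : ℕ) (y : ℕ → ℝ) (k : ℕ) : ℝ :=
  ∑ v ∈ Finset.range (m + 1), (-1 : ℝ) ^ v * (m.choose v : ℝ) * y (k + v)

/-- The associated matrix
`b_{ik} = (1/i)·(Δ^{m-1}α_{1k} − Δ^{m-1}α_{(i+1)k})`, where `Δ^{m-1}` acts on
the row index. -/
noncomputable def bmat (m : ℕ) (α : ℕ → ℕ → ℝ) (i k : ℕ) : ℝ :=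
  (1 / (i : ℝ)) *
    (fdiff (m - 1) (fun n => α n k) 1 - fdiff (m - 1) (fun n => α n k) (i + 1))

lemma fdiff_succ (M : ℕ) (y : ℕ → ℝ) (k : ℕ) :
    fdiff (M + 1) y k = fdiff M y k - fdiff M y (k + 1) := by
  unfold fdiff
  rw [Finset.sum_range_succ' (fun v => (-1:ℝ)^v * ((M+1).choose v : ℝ) * y (k+v)) (M+1)]
  have h1 : ∀ v ∈ Finset.range (M+1),
      (-1:ℝ)^(v+1) * ((M+1).choose (v+1) : ℝ) * y (k+(v+1))
        = (-((-1:ℝ)^v * (M.choose (v+1) : ℝ) * y (k+(v+1))))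
          + (-((-1:ℝ)^v * (M.choose v : ℝ) * y (k+(v+1)))) := by
    intro v _
    have : (((M+1).choose (v+1) : ℕ) : ℝ) = (M.choose v : ℝ) + (M.choose (v+1) : ℝ) := by
      rw [Nat.choose_succ_succ]; push_cast; ring
    rw [this]; ring
  rw [Finset.sum_congr rfl h1, Finset.sum_add_distrib]
  have h2 : ∑ v ∈ Finset.range (M+1), (-((-1:ℝ)^v * (M.choose v : ℝ) * y (k+(v+1))))
      = -(∑ v ∈ Finset.range (M+1), (-1:ℝ)^v * (M.choose v : ℝ) * y (k+1+v)) := by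
    rw [← Finset.sum_neg_distrib]
    exact Finset.sum_congr rfl (fun v _ => by rw [show k+1+v = k+(v+1) by omega])
  have h3 : ∑ v ∈ Finset.range (M+1), (-((-1:ℝ)^v * (M.choose (v+1) : ℝ) * y (k+(v+1))))
      + (-1:ℝ)^0 * ((M+1).choose 0 : ℝ) * y (k+0)
      = ∑ v ∈ Finset.range (M+1), (-1:ℝ)^v * (M.choose v : ℝ) * y (k+v) := by
    rw [Finset.sum_range_succ' (fun v => (-1:ℝ)^v * (M.choose v : ℝ) * y (k+v)) M,
        Finset.sum_range_succ]
    simp [Nat.choose_succ_self]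
    rw [← Finset.sum_neg_distrib]
    exact Finset.sum_congr rfl (fun v _ => by ring)
  rw [add_right_comm, h3, h2]; ring



lemma fdiff_mul_eq (M : ℕ) (α : ℕ → ℕ → ℝ) (t : ℕ → ℝ) (n : ℕ) :
    (fun k => fdiff M (fun j => α j (k + 1)) n * t (k + 1))
      = fun k => ∑ v ∈ Finset.range (M + 1),
          (-1 : ℝ) ^ v * (M.choose v : ℝ) * (α (n + v) (k + 1) * t (k + 1)) := by
  funext k
  simp [fdiff, Finset.sum_mul, mul_assoc]

lemma summable_fdiff_mul (M : ℕ) (α : ℕ → ℕ → ℝ) (t : ℕ → ℝ) (n : ℕ) (hn : 1 ≤ n)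
    (hA : ∀ j, 1 ≤ j → Summable fun k => α j (k + 1) * t (k + 1)) :
    Summable fun k => fdiff M (fun j => α j (k + 1)) n * t (k + 1) := by
  rw [fdiff_mul_eq]
  exact summable_sum fun v _ => (hA (n + v) (le_trans hn (Nat.le_add_right n v))).mul_left _

lemma tsum_fdiff_mul (M : ℕ) (α : ℕ → ℕ → ℝ) (t : ℕ → ℝ) (n : ℕ) (hn : 1 ≤ n)
    (hA : ∀ j, 1 ≤ j → Summable fun k => α j (k + 1) * t (k + 1)) :
    ∑' k : ℕ, fdiff M (fun j => α j (k + 1)) n * t (k + 1)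
      = fdiff M (fun j => ∑' k : ℕ, α j (k + 1) * t (k + 1)) n := by
  rw [fdiff_mul_eq]
  rw [Summable.tsum_finsetSum fun v _ => (hA (n + v) (le_trans hn (Nat.le_add_right n v))).mul_left _]
  simp only [fdiff]
  exact Finset.sum_congr rfl fun v _ => by rw [tsum_mul_left]

lemma key (m : ℕ) (hm : 1 ≤ m) (α : ℕ → ℕ → ℝ) (t : ℕ → ℝ)
    (hA : ∀ j, 1 ≤ j → Summable fun k => α j (k + 1) * t (k + 1)) (i : ℕ) :
    (1 / (i : ℝ)) * ∑ n ∈ Finset.Icc 1 i,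
        fdiff m (fun j => ∑' k : ℕ, α j (k + 1) * t (k + 1)) n
      = ∑' k : ℕ, bmat m α i (k + 1) * t (k + 1) := by
  set A : ℕ → ℝ := fun j => ∑' k : ℕ, α j (k + 1) * t (k + 1) with hAdef
  obtain ⟨M, rfl⟩ : ∃ M, m = M + 1 := ⟨m - 1, (Nat.succ_pred_eq_of_pos hm).symm⟩
  -- telescoping
  have tel : ∑ n ∈ Finset.Icc 1 i, fdiff (M + 1) A n
      = fdiff M A 1 - fdiff M A (i + 1) := by
    have : ∀ n, fdiff (M + 1) A n = fdiff M A n - fdiff M A (n + 1) := fdiff_succ M A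
    calc ∑ n ∈ Finset.Icc 1 i, fdiff (M + 1) A n
        = ∑ j ∈ Finset.range i, (fdiff M A (1 + j) - fdiff M A (1 + (j + 1))) := by
          rw [← Finset.Ico_add_one_right_eq_Icc, Finset.sum_Ico_eq_sum_range,
            show i + 1 - 1 = i from rfl]
          exact Finset.sum_congr rfl fun j _ => by
            rw [this (1 + j), show 1 + j + 1 = 1 + (j + 1) by omega]
      _ = fdiff M A 1 - fdiff M A (1 + i) :=
          Finset.sum_range_sub' (fun j => fdiff M A (1 + j)) i
      _ = fdiff M A 1 - fdiff M A (i + 1) := by rw [Nat.add_comm 1 i]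
  rw [tel]
  have hb : (fun k => bmat (M + 1) α i (k + 1) * t (k + 1))
      = fun k => (1 / (i : ℝ)) * (fdiff M (fun j => α j (k + 1)) 1 * t (k + 1)
          - fdiff M (fun j => α j (k + 1)) (i + 1) * t (k + 1)) := by
    funext k
    simp only [bmat, Nat.add_sub_cancel]
    ring
  rw [hb, tsum_mul_left,
    Summable.tsum_sub (summable_fdiff_mul M α t 1 le_rfl hA)
      (summable_fdiff_mul M α t (i + 1) (Nat.le_add_left 1 i) hA),
    tsum_fdiff_mul M α t 1 le_rfl hA,
    tsum_fdiff_mul M α t (i + 1) (Nat.le_add_left 1 i) hA]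

lemma summable_bmat_mul (m : ℕ) (α : ℕ → ℕ → ℝ) (t : ℕ → ℝ) (i : ℕ)
    (hA : ∀ j, 1 ≤ j → Summable fun k => α j (k + 1) * t (k + 1)) :
    Summable fun k => bmat m α i (k + 1) * t (k + 1) := by
  have hb : (fun k => bmat m α i (k + 1) * t (k + 1))
      = fun k => (1 / (i : ℝ)) * (fdiff (m - 1) (fun j => α j (k + 1)) 1 * t (k + 1)
          - fdiff (m - 1) (fun j => α j (k + 1)) (i + 1) * t (k + 1)) := by
    funext k; simp only [bmat]; ring
  rw [hb]
  exact (((summable_fdiff_mul _ α t 1 le_rfl hA).sub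
    (summable_fdiff_mul _ α t (i + 1) (Nat.le_add_left 1 i) hA)).mul_left _)

/-- `A ∈ (ℓ_∞^G, C_p^G(Δ_G^m))` iff the rows of `A` are in
`ℓ_1^G` and `B ∈ (ℓ_∞^G, ℓ_p^G)`, stated after taking logarithms
(`α_{nk} = log a_{nk}`, `t_k = log x_k`). -/
theorem matrix_linf_to_CpG (m : ℕ) (hm : 1 ≤ m) (p : ℝ) (hp : 1 ≤ p)
    (α : ℕ → ℕ → ℝ) :
    (∀ t : ℕ → ℝ, (∃ C : ℝ, ∀ k, |t k| ≤ C) →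
        (∀ n, 1 ≤ n → Summable (fun k : ℕ => α n (k + 1) * t (k + 1))) ∧
        Summable (fun i : ℕ =>
          |(1 / (i : ℝ)) * ∑ n ∈ Finset.Icc 1 i,
              fdiff m (fun j => ∑' k : ℕ, α j (k + 1) * t (k + 1)) n| ^ p)) ↔
      ((∀ n, 1 ≤ n → Summable (fun k : ℕ => |α n (k + 1)|)) ∧
        ∀ t : ℕ → ℝ, (∃ C : ℝ, ∀ k, |t k| ≤ C) →
          (∀ i, 1 ≤ i → Summable (fun k : ℕ => bmat m α i (k + 1) * t (k + 1))) ∧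
          Summable (fun i : ℕ =>
            |∑' k : ℕ, bmat m α (i + 1) (k + 1) * t (k + 1)| ^ p)) := by
  constructor
  · intro H
    have hrow : ∀ n, 1 ≤ n → Summable fun k : ℕ => |α n (k + 1)| := by
      intro n hn
      set t : ℕ → ℝ := fun k => if 0 ≤ α n k then 1 else -1 with ht
      have hb : ∃ C : ℝ, ∀ k, |t k| ≤ C :=
        ⟨1, fun k => by dsimp [t]; split_ifs <;> simp⟩
      refine ((H t hb).1 n hn).congr fun k => ?_
      dsimp [t]
      split_ifs with h
      · rw [mul_one, abs_of_nonneg h]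
      · rw [mul_neg_one, abs_of_neg (lt_of_not_ge h)]
    refine ⟨hrow, ?_⟩
    intro t htb
    have hA : ∀ j, 1 ≤ j → Summable fun k => α j (k + 1) * t (k + 1) := (H t htb).1
    refine ⟨fun i _ => summable_bmat_mul m α t i hA, ?_⟩
    have S' : Summable (fun i : ℕ =>
        |∑' k : ℕ, bmat m α i (k + 1) * t (k + 1)| ^ p) :=
      (H t htb).2.congr fun i => by rw [key m hm α t hA i]
    exact (summable_nat_add_iff
      (f := fun i : ℕ => |∑' k : ℕ, bmat m α i (k + 1) * t (k + 1)| ^ p) 1).2 S'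
  · rintro ⟨hrow, hB⟩ t htb
    obtain ⟨C, hC⟩ := htb
    have hA : ∀ j, 1 ≤ j → Summable fun k => α j (k + 1) * t (k + 1) := by
      intro j hj
      have h1 : Summable fun k : ℕ => |α j (k + 1)| * C := (hrow j hj).mul_right C
      refine Summable.of_abs (h1.of_nonneg_of_le (fun k => abs_nonneg _) fun k => ?_)
      rw [abs_mul]
      exact mul_le_mul_of_nonneg_left (hC (k + 1)) (abs_nonneg _)
    refine ⟨hA, ?_⟩
    have S' : Summable (fun i : ℕ =>
        |∑' k : ℕ, bmat m α i (k + 1) * t (k + 1)| ^ p) :=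
      (summable_nat_add_iff
        (f := fun i : ℕ => |∑' k : ℕ, bmat m α i (k + 1) * t (k + 1)| ^ p) 1).1
        (hB t ⟨C, hC⟩).2
    exact S'.congr fun i => by rw [key m hm α t hA i]
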